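/- For the pp-wave metric, at every point p ∈ ℝ⁴ the only nonvanishing components of the Riemann curvature tensor are: R⁰₂₂₁ = −R⁰₂₁₂ = ∂₂∂₂H, R⁰₂₃₁ = −R⁰₂₁₃ = ∂₃∂₂H, R⁰₃₂₁ = −R⁰₃₁₂ = ∂₂∂₃H, R⁰₃₃₁ = −R⁰₃₁₃ = ∂₃∂₃H, R²₁₂₁ = −R²₁₁₂ = ∂₂∂₂H, R²₁₃₁ = −R²₁₁₃ = ∂₃∂₂H, R³₁₂₁ = −R³₁₁₂ = ∂₂∂₃H, R³₁₃₁ = −R³₁₁₃ = ∂₃∂₃H; every component R^α_{βμν}(p) not in this list equals 0. -/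

import Mathlib

noncomputable section

open scoped BigOperators

/-- Partial derivative of `f : ℝ⁴ → ℝ` in the `μ`-th coordinate direction. -/
def pd (μ : Fin 4) (f : (Fin 4 → ℝ) → ℝ) (p : Fin 4 → ℝ) : ℝ :=
  fderiv ℝ f p (Pi.single μ 1)

/-- The pp-wave metric `ds² = 2H du² + 2 du dv − dx² − dy²` in coordinates
`(v,u,x,y)`. -/
def gmet (H : (Fin 4 → ℝ) → ℝ) (p : Fin 4 → ℝ) : Matrix (Fin 4) (Fin 4) ℝ :=
  Matrix.of fun μ ν =>
    if μ = 1 ∧ ν = 1 then 2 * H p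
    else if (μ = 0 ∧ ν = 1) ∨ (μ = 1 ∧ ν = 0) then 1
    else if (μ = 2 ∧ ν = 2) ∨ (μ = 3 ∧ ν = 3) then (-1 : ℝ)
    else 0

/-- The pointwise inverse of the pp-wave metric. -/
def ginv (H : (Fin 4 → ℝ) → ℝ) (p : Fin 4 → ℝ) : Matrix (Fin 4) (Fin 4) ℝ :=
  Matrix.of fun μ ν =>
    if μ = 0 ∧ ν = 0 then -2 * H p
    else if (μ = 0 ∧ ν = 1) ∨ (μ = 1 ∧ ν = 0) then 1
    else if (μ = 2 ∧ ν = 2) ∨ (μ = 3 ∧ ν = 3) then (-1 : ℝ)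
    else 0

/-- Christoffel symbols `Γ^l_{μν}` of the Levi-Civita connection of the pp-wave metric. -/
def Γpp (H : (Fin 4 → ℝ) → ℝ) (l μ ν : Fin 4) (p : Fin 4 → ℝ) : ℝ :=
  (1 / 2) * ∑ σ : Fin 4, ginv H p l σ *
    (pd μ (fun q => gmet H q ν σ) p + pd ν (fun q => gmet H q μ σ) p
      - pd σ (fun q => gmet H q μ ν) p)

/-- Riemann curvature components
`R^a_{bμν} = ∂_μ Γ^a_{bν} − ∂_ν Γ^a_{bμ} + Σ_γ (Γ^a_{γμ}Γ^γ_{bν} − Γ^a_{γν}Γ^γ_{bμ})`. -/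
def Riem (H : (Fin 4 → ℝ) → ℝ) (a b μ ν : Fin 4) (p : Fin 4 → ℝ) : ℝ :=
  pd μ (Γpp H a b ν) p - pd ν (Γpp H a b μ) p
    + ∑ γ : Fin 4, (Γpp H a γ μ p * Γpp H γ b ν p - Γpp H a γ ν p * Γpp H γ b μ p)

/-- Ricci tensor `Ric_{bν} = Σ_a R^a_{baν}`. -/
def Ricci (H : (Fin 4 → ℝ) → ℝ) (b ν : Fin 4) (p : Fin 4 → ℝ) : ℝ :=
  ∑ a : Fin 4, Riem H a b a ν p

/-- Scalar curvature `S = Σ_{β,ν} ginv^{βν} Ric_{βν}`. -/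
def Scal (H : (Fin 4 → ℝ) → ℝ) (p : Fin 4 → ℝ) : ℝ :=
  ∑ b : Fin 4, ∑ ν : Fin 4, ginv H p b ν * Ricci H b ν p


section PPWaveAux

variable (H : (Fin 4 → ℝ) → ℝ)

lemma pd_zero' (μ : Fin 4) (p : Fin 4 → ℝ) : pd μ (0 : (Fin 4 → ℝ) → ℝ) p = 0 := by
  rw [show (0 : (Fin 4 → ℝ) → ℝ) = fun _ => (0:ℝ) from rfl]
  simp [pd]

lemma fderiv_fderiv_diff (hH : ContDiff ℝ (⊤ : ℕ∞) H) :
    Differentiable ℝ (fderiv ℝ H) :=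
  (contDiff_infty_iff_fderiv.mp hH).2.differentiable (by simp)

lemma pd_pd_eq (hH : ContDiff ℝ (⊤ : ℕ∞) H) (i j : Fin 4) (p : Fin 4 → ℝ) :
    pd i (pd j H) p = fderiv ℝ (fderiv ℝ H) p (Pi.single i 1) (Pi.single j 1) := by
  have h1 : DifferentiableAt ℝ (fderiv ℝ H) p := fderiv_fderiv_diff H hH p
  unfold pd
  rw [show (fun q => fderiv ℝ H q (Pi.single j 1))
      = fun q => (fderiv ℝ H q) (Pi.single j 1) from rfl]
  rw [fderiv_clm_apply h1 (differentiableAt_const _)]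
  simp

lemma pd_symm (hH : ContDiff ℝ (⊤ : ℕ∞) H) (i j : Fin 4) (p : Fin 4 → ℝ) :
    pd i (pd j H) p = pd j (pd i H) p := by
  rw [pd_pd_eq H hH, pd_pd_eq H hH]
  exact second_derivative_symmetric
    (fun y => ((contDiff_infty_iff_fderiv.mp hH).1 y).hasFDerivAt)
    ((fderiv_fderiv_diff H hH p).hasFDerivAt) _ _

lemma pd_pd0 (h0 : ∀ p, pd 0 H p = 0) (k : Fin 4) (p : Fin 4 → ℝ) :
    pd k (pd 0 H) p = 0 := by
  have h : pd 0 H = (0 : (Fin 4 → ℝ) → ℝ) := funext h0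
  rw [h]; exact pd_zero' _ _

lemma pd0_pd (hH : ContDiff ℝ (⊤ : ℕ∞) H) (h0 : ∀ p, pd 0 H p = 0) (k : Fin 4) (p : Fin 4 → ℝ) :
    pd 0 (pd k H) p = 0 := by
  rw [pd_symm H hH]; exact pd_pd0 H h0 k p

/-- Closed form of the pp-wave Christoffel symbols. -/
def Gam (a b ν : Fin 4) : (Fin 4 → ℝ) → ℝ :=
  if a = 0 ∧ b = 1 ∧ ν = 1 then pd 1 H
  else if a = 0 ∧ ((b = 1 ∧ ν = 2) ∨ (b = 2 ∧ ν = 1)) then pd 2 H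
  else if a = 0 ∧ ((b = 1 ∧ ν = 3) ∨ (b = 3 ∧ ν = 1)) then pd 3 H
  else if a = 2 ∧ b = 1 ∧ ν = 1 then pd 2 H
  else if a = 3 ∧ b = 1 ∧ ν = 1 then pd 3 H
  else 0

lemma pd_gmet (hH : Differentiable ℝ H) (μ ν σ : Fin 4) (p : Fin 4 → ℝ) :
    pd μ (fun q => gmet H q ν σ) p = if ν = 1 ∧ σ = 1 then 2 * pd μ H p else 0 := by
  by_cases h : ν = 1 ∧ σ = 1
  · obtain ⟨rfl, rfl⟩ := h
    have h2 : (fun q => gmet H q 1 1) = fun q => 2 * H q := by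
      funext q; simp [gmet]
    rw [h2, if_pos ⟨rfl, rfl⟩]
    unfold pd
    rw [fderiv_const_mul (hH p)]
    simp
  · have h2 : (fun q => gmet H q ν σ) = fun _ =>
        (if (ν = 0 ∧ σ = 1) ∨ (ν = 1 ∧ σ = 0) then (1:ℝ)
         else if (ν = 2 ∧ σ = 2) ∨ (ν = 3 ∧ σ = 3) then -1 else 0) := by
      funext q; simp [gmet, h]
    rw [h2, if_neg h]
    simp [pd]

lemma Gam_eq (hH : Differentiable ℝ H) (h0 : ∀ p, pd 0 H p = 0) (a b ν : Fin 4) :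
    Γpp H a b ν = Gam H a b ν := by
  funext q
  fin_cases a <;> fin_cases b <;> fin_cases ν <;>
    simp [Γpp, Gam, ginv, Fin.sum_univ_four, pd_gmet H hH, h0 q]

lemma Gam_mul (a b m n γ : Fin 4) (p : Fin 4 → ℝ) :
    Gam H a γ m p * Gam H γ b n p = Gam H a γ n p * Gam H γ b m p := by
  fin_cases γ <;> simp [Gam] <;> split_ifs <;> simp_all

lemma Riem_eq (hH : Differentiable ℝ H) (h0 : ∀ p, pd 0 H p = 0) (a b m n : Fin 4)
    (p : Fin 4 → ℝ) :
    Riem H a b m n p = pd m (Gam H a b n) p - pd n (Gam H a b m) p := by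
  unfold Riem
  rw [Gam_eq H hH h0 a b n, Gam_eq H hH h0 a b m]
  have hz : ∀ γ ∈ (Finset.univ : Finset (Fin 4)),
      Γpp H a γ m p * Γpp H γ b n p - Γpp H a γ n p * Γpp H γ b m p = 0 := by
    intro γ _
    rw [Gam_eq H hH h0, Gam_eq H hH h0, Gam_eq H hH h0, Gam_eq H hH h0, Gam_mul]
    ring
  rw [Finset.sum_congr rfl hz]
  simp

end PPWaveAux

set_option maxHeartbeats 4000000 in
/-- The nonvanishing Riemann curvature components of the pp-wave metric. -/
theorem pp_wave_riemann (H : (Fin 4 → ℝ) → ℝ)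
    (hH : ContDiff ℝ (⊤ : ℕ∞) H) (h0 : ∀ p, pd 0 H p = 0) (p : Fin 4 → ℝ) :
    Riem H 0 2 2 1 p = pd 2 (pd 2 H) p ∧ Riem H 0 2 1 2 p = -pd 2 (pd 2 H) p ∧
    Riem H 0 2 3 1 p = pd 3 (pd 2 H) p ∧ Riem H 0 2 1 3 p = -pd 3 (pd 2 H) p ∧
    Riem H 0 3 2 1 p = pd 2 (pd 3 H) p ∧ Riem H 0 3 1 2 p = -pd 2 (pd 3 H) p ∧
    Riem H 0 3 3 1 p = pd 3 (pd 3 H) p ∧ Riem H 0 3 1 3 p = -pd 3 (pd 3 H) p ∧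
    Riem H 2 1 2 1 p = pd 2 (pd 2 H) p ∧ Riem H 2 1 1 2 p = -pd 2 (pd 2 H) p ∧
    Riem H 2 1 3 1 p = pd 3 (pd 2 H) p ∧ Riem H 2 1 1 3 p = -pd 3 (pd 2 H) p ∧
    Riem H 3 1 2 1 p = pd 2 (pd 3 H) p ∧ Riem H 3 1 1 2 p = -pd 2 (pd 3 H) p ∧
    Riem H 3 1 3 1 p = pd 3 (pd 3 H) p ∧ Riem H 3 1 1 3 p = -pd 3 (pd 3 H) p ∧
    ∀ a b m n : Fin 4,
      (a, b, m, n) ∉ ({(0, 2, 2, 1), (0, 2, 1, 2), (0, 2, 3, 1), (0, 2, 1, 3),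
          (0, 3, 2, 1), (0, 3, 1, 2), (0, 3, 3, 1), (0, 3, 1, 3),
          (2, 1, 2, 1), (2, 1, 1, 2), (2, 1, 3, 1), (2, 1, 1, 3),
          (3, 1, 2, 1), (3, 1, 1, 2), (3, 1, 3, 1), (3, 1, 1, 3)} :
          Set (Fin 4 × Fin 4 × Fin 4 × Fin 4)) →
      Riem H a b m n p = 0 := by
  have hd : Differentiable ℝ H := hH.differentiable (by simp)
  have s21 : pd 2 (pd 1 H) p = pd 1 (pd 2 H) p := pd_symm H hH 2 1 p
  have s31 : pd 3 (pd 1 H) p = pd 1 (pd 3 H) p := pd_symm H hH 3 1 p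
  have s32 : pd 3 (pd 2 H) p = pd 2 (pd 3 H) p := pd_symm H hH 3 2 p
  refine ⟨?_, ?_, ?_, ?_, ?_, ?_, ?_, ?_, ?_, ?_, ?_, ?_, ?_, ?_, ?_, ?_, ?_⟩
  · rw [Riem_eq H hd h0]; simp [Gam, pd_zero']
  · rw [Riem_eq H hd h0]; simp [Gam, pd_zero']
  · rw [Riem_eq H hd h0]; simp [Gam, pd_zero']
  · rw [Riem_eq H hd h0]; simp [Gam, pd_zero']
  · rw [Riem_eq H hd h0]; simp [Gam, pd_zero']
  · rw [Riem_eq H hd h0]; simp [Gam, pd_zero']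
  · rw [Riem_eq H hd h0]; simp [Gam, pd_zero']
  · rw [Riem_eq H hd h0]; simp [Gam, pd_zero']
  · rw [Riem_eq H hd h0]; simp [Gam, pd_zero']
  · rw [Riem_eq H hd h0]; simp [Gam, pd_zero']
  · rw [Riem_eq H hd h0]; simp [Gam, pd_zero']
  · rw [Riem_eq H hd h0]; simp [Gam, pd_zero']
  · rw [Riem_eq H hd h0]; simp [Gam, pd_zero']
  · rw [Riem_eq H hd h0]; simp [Gam, pd_zero']
  · rw [Riem_eq H hd h0]; simp [Gam, pd_zero']
  · rw [Riem_eq H hd h0]; simp [Gam, pd_zero']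
  · intro a b m n hmem
    rw [Riem_eq H hd h0]
    fin_cases a <;> fin_cases b <;> fin_cases m <;> fin_cases n <;>
      first
        | (simp [Gam, pd_zero', pd_pd0 H h0, pd0_pd H hH h0, s21, s31, s32]; done)
        | exact absurd (by simp) hmem
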